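/- With the quadratic symbols q₀₀, q₁₁ and the symbol b := [2q₁₁ + (m − 2ξ₁ξ₂)q₀₀]/Δ, define b₀(ξ) := g¹¹_u/(4m) + (iξ/(2m))(g⁰¹_{uₜ} + g¹¹_{uₓ}/2) and b₁(ξ) := −(i/4)g⁰¹_{uₜ} + (ξ/(4m))(2f_{uₜuₜ} − g¹¹_u). Then there exists C > 0 such that for all real ξ₁, ξ₂ with ⟨ξ₁⟩ ≤ ⟨ξ₂⟩/20 one has |b(ξ₁,ξ₂) − b₀(ξ₁) − b₁(ξ₁)/ξ₂| ≤ C(1 + |ξ₁|³)/ξ₂², where ⟨ξ⟩ := (1 + ξ²)^{1/2}. -/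

import Mathlib

open Complex

/-- The quadratic symbol `q₀₀(ξ₁,ξ₂) = f_{uₜuₜ} + i g⁰¹_{uₜ}(ξ₁+ξ₂)`. -/
noncomputable def q00 (futut g01ut : ℝ) (ξ₁ ξ₂ : ℝ) : ℂ :=
  (futut : ℂ) + Complex.I * g01ut * ((ξ₁ : ℂ) + ξ₂)

/-- The quadratic symbol
`q₁₁(ξ₁,ξ₂) = f_{uu} − (g¹¹_u/2)(ξ₁² + ξ₂²) − (i g¹¹_{uₓ}/2)(ξ₁ξ₂² + ξ₂ξ₁²)`. -/
noncomputable def q11 (fuu g11u g11ux : ℝ) (ξ₁ ξ₂ : ℝ) : ℂ :=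
  (fuu : ℂ) - (g11u : ℂ)/2 * ((ξ₁ : ℂ)^2 + (ξ₂ : ℂ)^2)
    - Complex.I * g11ux / 2 * ((ξ₁ : ℂ) * (ξ₂ : ℂ)^2 + (ξ₂ : ℂ) * (ξ₁ : ℂ)^2)

/-- The denominator `Δ(ξ₁,ξ₂) = (m − 2ξ₁ξ₂)² − 4(ξ₁² + m)(ξ₂² + m)`. -/
noncomputable def Δc (m ξ₁ ξ₂ : ℝ) : ℂ :=
  ((m : ℂ) - 2*ξ₁*ξ₂)^2 - 4*((ξ₁ : ℂ)^2 + m)*((ξ₂ : ℂ)^2 + m)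

/-- The normal form symbol `b = [2q₁₁ + (m − 2ξ₁ξ₂)q₀₀]/Δ`. -/
noncomputable def bSym (m fuu futut g01ut g11u g11ux : ℝ) (ξ₁ ξ₂ : ℝ) : ℂ :=
  (2 * q11 fuu g11u g11ux ξ₁ ξ₂
    + ((m : ℂ) - 2*ξ₁*ξ₂) * q00 futut g01ut ξ₁ ξ₂) / Δc m ξ₁ ξ₂

/-- First low–high Taylor coefficient
`b₀(ξ) = g¹¹_u/(4m) + (iξ/(2m))(g⁰¹_{uₜ} + g¹¹_{uₓ}/2)`. -/
noncomputable def b0 (m g01ut g11u g11ux : ℝ) (ξ : ℝ) : ℂ :=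
  (g11u : ℂ)/(4*m) + Complex.I * ξ/(2*m) * ((g01ut : ℂ) + (g11ux : ℂ)/2)

/-- Second low–high Taylor coefficient
`b₁(ξ) = −(i/4)g⁰¹_{uₜ} + (ξ/(4m))(2f_{uₜuₜ} − g¹¹_u)`. -/
noncomputable def b1 (m futut g01ut g11u : ℝ) (ξ : ℝ) : ℂ :=
  -(Complex.I/4) * g01ut + (ξ : ℂ)/(4*m) * (2*(futut : ℂ) - g11u)

set_option maxHeartbeats 2000000 in
/-- Low–high symbol expansion of the normal form correction `B`:
`|b(ξ₁,ξ₂) − b₀(ξ₁) − b₁(ξ₁)/ξ₂| ≤ C(1 + |ξ₁|³)/ξ₂²` for `⟨ξ₁⟩ ≤ ⟨ξ₂⟩/20`. -/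
theorem bSym_low_high_expansion (m fuu futut futu g01u g01ut g01ux g11u g11ut g11ux : ℝ)
    (hm : 0 < m) :
    ∃ C > 0, ∀ ξ₁ ξ₂ : ℝ,
      Real.sqrt (1 + ξ₁^2) ≤ Real.sqrt (1 + ξ₂^2) / 20 →
      ‖bSym m fuu futut g01ut g11u g11ux ξ₁ ξ₂
          - b0 m g01ut g11u g11ux ξ₁ - b1 m futut g01ut g11u ξ₁ / ξ₂‖
        ≤ C * (1 + |ξ₁|^3) / ξ₂^2 := by
  set K : ℝ := |(-3*m^3*g01ut : ℝ)| + |(m*(8*fuu+3*m*g11u+4*m*futut) : ℝ)|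
      + |(m^2*(6*futut-3*g11u) : ℝ)| + |(m^2*(3*g11ux+6*g01ut) : ℝ)|
      + |(-4*m^2*g01ut : ℝ)| + |(m*(8*futut-4*g11u) : ℝ)|
      + |(m*(8*futut-4*g11u) : ℝ)| + |(m*(4*g11ux+8*g01ut) : ℝ)| with hK
  have hKnn : 0 ≤ K := by
    rw [hK]; positivity
  have hCpos : 0 < K/(8*m^2) + 1 := by
    have h1 : 0 ≤ K/(8*m^2) := div_nonneg hKnn (by positivity)
    linarith
  refine ⟨K/(8*m^2) + 1, hCpos, ?_⟩
  intro ξ₁ ξ₂ hle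
  have hs1 : (0:ℝ) ≤ 1 + ξ₁^2 := by positivity
  have hs2 : (0:ℝ) ≤ 1 + ξ₂^2 := by positivity
  have hsq : 1 + ξ₁^2 ≤ (1 + ξ₂^2)/400 := by
    have h := mul_self_le_mul_self (Real.sqrt_nonneg _) hle
    rw [Real.mul_self_sqrt hs1] at h
    calc 1 + ξ₁^2 ≤ Real.sqrt (1+ξ₂^2)/20 * (Real.sqrt (1+ξ₂^2)/20) := h
      _ = Real.sqrt (1+ξ₂^2) * Real.sqrt (1+ξ₂^2) / 400 := by ring
      _ = (1 + ξ₂^2)/400 := by rw [Real.mul_self_sqrt hs2]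
  have hB2 : (399:ℝ) ≤ ξ₂^2 := by nlinarith [sq_nonneg ξ₁]
  have hBpos : (0:ℝ) < ξ₂^2 := by linarith
  have hBne : ξ₂ ≠ 0 := by
    intro h; rw [h] at hBpos; simp at hBpos
  set A : ℝ := |ξ₁| with hA
  set B : ℝ := |ξ₂| with hB
  have hAnn : 0 ≤ A := abs_nonneg _
  have hBnn : 0 ≤ B := abs_nonneg _
  have hBsq : B^2 = ξ₂^2 := sq_abs _
  have hB1 : (1:ℝ) ≤ B := by nlinarith
  have hA1 : A ≤ 1 + A^3 := by nlinarith [sq_nonneg (A-1), mul_nonneg hAnn (sq_nonneg (A-1))]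
  have hA2 : A^2 ≤ 1 + A^3 := by nlinarith [sq_nonneg (A-1), mul_nonneg hAnn (sq_nonneg (A-1))]
  have hA3 : A^3 ≤ 1 + A^3 := by linarith
  have hA0 : (1:ℝ) ≤ 1 + A^3 := by nlinarith [pow_nonneg hAnn 3]
  have hP : (0:ℝ) ≤ 1 + A^3 := le_trans zero_le_one hA0
  -- the real denominator
  set Dr : ℝ := 4*m*(ξ₁^2+ξ₂^2+ξ₁*ξ₂) + 3*m^2 with hDr
  have hDrval : Δc m ξ₁ ξ₂ = ((-Dr : ℝ) : ℂ) := by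
    unfold Δc; rw [hDr]; push_cast; ring
  have hDrpos : 0 < Dr := by
    rw [hDr]; nlinarith [sq_nonneg (ξ₁+ξ₂), sq_nonneg ξ₁, sq_nonneg ξ₂]
  have hDr2 : 2*m*ξ₂^2 ≤ Dr := by
    rw [hDr]; nlinarith [sq_nonneg (ξ₁+ξ₂), sq_nonneg ξ₁]
  have hΔne : Δc m ξ₁ ξ₂ ≠ 0 := by
    rw [hDrval]
    simp only [ne_eq, Complex.ofReal_eq_zero]
    exact neg_ne_zero.mpr (ne_of_gt hDrpos)
  have hmne : (m:ℂ) ≠ 0 := by exact_mod_cast ne_of_gt hm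
  have hξ₂ne : (ξ₂:ℂ) ≠ 0 := by exact_mod_cast hBne
  -- the numerator polynomial
  set N : ℂ := Complex.I * ((-3*m^3*g01ut : ℝ) : ℂ)
      + ((m*(8*fuu+3*m*g11u+4*m*futut) : ℝ) : ℂ) * ξ₂
      + ((m^2*(6*futut-3*g11u) : ℝ) : ℂ) * ξ₁
      + Complex.I * ((m^2*(3*g11ux+6*g01ut) : ℝ) : ℂ) * ξ₁ * ξ₂
      + Complex.I * ((-4*m^2*g01ut : ℝ) : ℂ) * (ξ₁:ℂ)^2
      + ((m*(8*futut-4*g11u) : ℝ) : ℂ) * (ξ₁:ℂ)^2 * ξ₂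
      + ((m*(8*futut-4*g11u) : ℝ) : ℂ) * (ξ₁:ℂ)^3
      + Complex.I * ((m*(4*g11ux+8*g01ut) : ℝ) : ℂ) * (ξ₁:ℂ)^3 * ξ₂ with hN
  have hΔne' : ((m : ℂ) - 2*ξ₁*ξ₂)^2 - 4*((ξ₁ : ℂ)^2 + m)*((ξ₂ : ℂ)^2 + m) ≠ 0 := hΔne
  have gen : ∀ (a d c e x μ : ℂ), d ≠ 0 → x ≠ 0 → μ ≠ 0 →
      a / d - c - e / x = (a*(4*μ*x) - (c*(4*μ)*x + e*(4*μ))*d) / (4*μ*x*d) := by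
    intro a d c e x μ hd hx hμ
    field_simp
    ring
  have key : bSym m fuu futut g01ut g11u g11ux ξ₁ ξ₂
      - b0 m g01ut g11u g11ux ξ₁ - b1 m futut g01ut g11u ξ₁ / ξ₂
      = N / (4*(m:ℂ)*ξ₂*Δc m ξ₁ ξ₂) := by
    rw [hN]
    unfold bSym
    rw [gen _ _ _ _ _ _ hΔne hξ₂ne hmne]
    congr 1
    have hc : b0 m g01ut g11u g11ux ξ₁ * (4*(m:ℂ))
        = (g11u:ℂ) + 2*Complex.I*ξ₁*((g01ut:ℂ) + (g11ux:ℂ)/2) := by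
      unfold b0; field_simp; ring
    have he : b1 m futut g01ut g11u ξ₁ * (4*(m:ℂ))
        = -Complex.I*m*g01ut + (ξ₁:ℂ)*(2*futut - g11u) := by
      unfold b1; field_simp
    rw [hc, he]
    unfold q00 q11 Δc
    push_cast
    ring
  rw [key]
  -- absolute value of the denominator
  have habsden : ‖4*(m:ℂ)*ξ₂*Δc m ξ₁ ξ₂‖ = 4*m*B*Dr := by
    have hrw : (4*(m:ℂ)*ξ₂*Δc m ξ₁ ξ₂) = (((4*m*ξ₂)*(-Dr) : ℝ) : ℂ) := by
      rw [hDrval]; push_cast; ring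
    rw [hrw, Complex.norm_real, Real.norm_eq_abs, abs_mul, abs_neg, abs_of_pos hDrpos, abs_mul, abs_mul,
      abs_of_pos hm, ← hB]
    norm_num
  -- bound the numerator
  have habsN : ‖N‖ ≤ K * (1 + A^3) * B := by
    have h1 : ‖Complex.I * ((-3*m^3*g01ut : ℝ) : ℂ)‖
        = |(-3*m^3*g01ut : ℝ)| := by
      rw [norm_mul, Complex.norm_I, one_mul, Complex.norm_real, Real.norm_eq_abs]
    have h2 : ‖((m*(8*fuu+3*m*g11u+4*m*futut) : ℝ) : ℂ) * ξ₂‖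
        = |(m*(8*fuu+3*m*g11u+4*m*futut) : ℝ)| * B := by
      rw [norm_mul, Complex.norm_real, Real.norm_eq_abs, Complex.norm_real, Real.norm_eq_abs, ← hB]
    have h3 : ‖((m^2*(6*futut-3*g11u) : ℝ) : ℂ) * ξ₁‖
        = |(m^2*(6*futut-3*g11u) : ℝ)| * A := by
      rw [norm_mul, Complex.norm_real, Real.norm_eq_abs, Complex.norm_real, Real.norm_eq_abs, ← hA]
    have h4 : ‖Complex.I * ((m^2*(3*g11ux+6*g01ut) : ℝ) : ℂ) * ξ₁ * ξ₂‖
        = |(m^2*(3*g11ux+6*g01ut) : ℝ)| * A * B := by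
      rw [norm_mul, norm_mul, norm_mul, Complex.norm_I, one_mul, Complex.norm_real, Real.norm_eq_abs, Complex.norm_real, Real.norm_eq_abs, Complex.norm_real, Real.norm_eq_abs, ← hA, ← hB]
    have h5 : ‖Complex.I * ((-4*m^2*g01ut : ℝ) : ℂ) * (ξ₁:ℂ)^2‖
        = |(-4*m^2*g01ut : ℝ)| * A^2 := by
      rw [norm_mul, norm_mul, Complex.norm_I, one_mul, Complex.norm_real, Real.norm_eq_abs, norm_pow, Complex.norm_real, Real.norm_eq_abs, ← hA]
    have h6 : ‖((m*(8*futut-4*g11u) : ℝ) : ℂ) * (ξ₁:ℂ)^2 * ξ₂‖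
        = |(m*(8*futut-4*g11u) : ℝ)| * A^2 * B := by
      rw [norm_mul, norm_mul, Complex.norm_real, Real.norm_eq_abs, norm_pow, Complex.norm_real, Real.norm_eq_abs, Complex.norm_real, Real.norm_eq_abs, ← hA, ← hB]
    have h7 : ‖((m*(8*futut-4*g11u) : ℝ) : ℂ) * (ξ₁:ℂ)^3‖
        = |(m*(8*futut-4*g11u) : ℝ)| * A^3 := by
      rw [norm_mul, Complex.norm_real, Real.norm_eq_abs, norm_pow, Complex.norm_real, Real.norm_eq_abs, ← hA]
    have h8 : ‖Complex.I * ((m*(4*g11ux+8*g01ut) : ℝ) : ℂ) * (ξ₁:ℂ)^3 * ξ₂‖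
        = |(m*(4*g11ux+8*g01ut) : ℝ)| * A^3 * B := by
      rw [norm_mul, norm_mul, norm_mul, Complex.norm_I, one_mul, Complex.norm_real, Real.norm_eq_abs, norm_pow, Complex.norm_real, Real.norm_eq_abs, Complex.norm_real, Real.norm_eq_abs, ← hA, ← hB]
    have tri : ‖N‖ ≤
        |(-3*m^3*g01ut : ℝ)| + |(m*(8*fuu+3*m*g11u+4*m*futut) : ℝ)| * B
        + |(m^2*(6*futut-3*g11u) : ℝ)| * A + |(m^2*(3*g11ux+6*g01ut) : ℝ)| * A * B
        + |(-4*m^2*g01ut : ℝ)| * A^2 + |(m*(8*futut-4*g11u) : ℝ)| * A^2 * B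
        + |(m*(8*futut-4*g11u) : ℝ)| * A^3 + |(m*(4*g11ux+8*g01ut) : ℝ)| * A^3 * B := by
      rw [hN]
      exact le_trans (norm_add_le _ _) (add_le_add
        (le_trans (norm_add_le _ _) (add_le_add
          (le_trans (norm_add_le _ _) (add_le_add
            (le_trans (norm_add_le _ _) (add_le_add
              (le_trans (norm_add_le _ _) (add_le_add
                (le_trans (norm_add_le _ _) (add_le_add
                  (le_trans (norm_add_le _ _) (add_le_add
                    (le_of_eq h1) (le_of_eq h2)))
                  (le_of_eq h3)))
                (le_of_eq h4)))
              (le_of_eq h5)))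
            (le_of_eq h6)))
          (le_of_eq h7)))
        (le_of_eq h8))
    refine le_trans tri ?_
    rw [hK]
    have e0 : ∀ c : ℝ, 0 ≤ c → c ≤ c * (1 + A^3) * B := by
      intro c hc
      have h := mul_le_mul_of_nonneg_left hA0 hc
      rw [mul_one] at h
      exact le_trans h (le_mul_of_one_le_right (mul_nonneg hc hP) hB1)
    have e1 : ∀ c : ℝ, 0 ≤ c → c * B ≤ c * (1 + A^3) * B := by
      intro c hc
      have h := mul_le_mul_of_nonneg_left hA0 hc
      rw [mul_one] at h
      exact mul_le_mul_of_nonneg_right h hBnn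
    have e2 : ∀ c : ℝ, 0 ≤ c → c * A ≤ c * (1 + A^3) * B := by
      intro c hc
      exact le_trans (mul_le_mul_of_nonneg_left hA1 hc)
        (le_mul_of_one_le_right (mul_nonneg hc hP) hB1)
    have e3 : ∀ c : ℝ, 0 ≤ c → c * A * B ≤ c * (1 + A^3) * B := by
      intro c hc
      exact mul_le_mul_of_nonneg_right (mul_le_mul_of_nonneg_left hA1 hc) hBnn
    have e4 : ∀ c : ℝ, 0 ≤ c → c * A^2 ≤ c * (1 + A^3) * B := by
      intro c hc
      exact le_trans (mul_le_mul_of_nonneg_left hA2 hc)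
        (le_mul_of_one_le_right (mul_nonneg hc hP) hB1)
    have e5 : ∀ c : ℝ, 0 ≤ c → c * A^2 * B ≤ c * (1 + A^3) * B := by
      intro c hc
      exact mul_le_mul_of_nonneg_right (mul_le_mul_of_nonneg_left hA2 hc) hBnn
    have e6 : ∀ c : ℝ, 0 ≤ c → c * A^3 ≤ c * (1 + A^3) * B := by
      intro c hc
      exact le_trans (mul_le_mul_of_nonneg_left hA3 hc)
        (le_mul_of_one_le_right (mul_nonneg hc hP) hB1)
    have e7 : ∀ c : ℝ, 0 ≤ c → c * A^3 * B ≤ c * (1 + A^3) * B := by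
      intro c hc
      exact mul_le_mul_of_nonneg_right (mul_le_mul_of_nonneg_left hA3 hc) hBnn
    have total := add_le_add (add_le_add (add_le_add (add_le_add (add_le_add (add_le_add
      (add_le_add
        (e0 _ (abs_nonneg (-3*m^3*g01ut : ℝ)))
        (e1 _ (abs_nonneg (m*(8*fuu+3*m*g11u+4*m*futut) : ℝ))))
        (e2 _ (abs_nonneg (m^2*(6*futut-3*g11u) : ℝ))))
        (e3 _ (abs_nonneg (m^2*(3*g11ux+6*g01ut) : ℝ))))
        (e4 _ (abs_nonneg (-4*m^2*g01ut : ℝ))))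
        (e5 _ (abs_nonneg (m*(8*futut-4*g11u) : ℝ))))
        (e6 _ (abs_nonneg (m*(8*futut-4*g11u) : ℝ))))
        (e7 _ (abs_nonneg (m*(4*g11ux+8*g01ut) : ℝ)))
    refine le_trans total (le_of_eq ?_)
    ring
  -- put everything together
  rw [norm_div, habsden]
  have h4mB : (0:ℝ) ≤ 4*m*B := mul_nonneg (by linarith) hBnn
  have hdenpos : 0 < 4*m*B*Dr :=
    mul_pos (mul_pos (by linarith) (lt_of_lt_of_le zero_lt_one hB1)) hDrpos
  rw [div_le_div_iff₀ hdenpos hBpos]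
  have step : ‖N‖ * ξ₂^2 ≤ (K * (1 + A^3) * B) * ξ₂^2 :=
    mul_le_mul_of_nonneg_right habsN (le_of_lt hBpos)
  refine le_trans step ?_
  have hmne' : m ≠ 0 := ne_of_gt hm
  have hfin : K * (1 + A^3) * B * ξ₂^2 ≤ (K/(8*m^2) + 1) * (1 + A^3) * (4*m*B*(2*m*ξ₂^2)) := by
    have hEq : (K/(8*m^2) + 1) * (1 + A^3) * (4*m*B*(2*m*ξ₂^2))
        = (K + 8*m^2) * (1 + A^3) * B * ξ₂^2 := by
      field_simp
      ring
    rw [hEq]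
    have h8 : K ≤ K + 8*m^2 := by nlinarith [sq_nonneg m]
    exact mul_le_mul_of_nonneg_right (mul_le_mul_of_nonneg_right
      (mul_le_mul_of_nonneg_right h8 hP) hBnn) (le_of_lt hBpos)
  refine le_trans hfin ?_
  have hCnn : (0:ℝ) ≤ (K/(8*m^2) + 1) * (1 + A^3) :=
    mul_nonneg (le_of_lt hCpos) hP
  exact mul_le_mul_of_nonneg_left (mul_le_mul_of_nonneg_left hDr2 h4mB) hCnn
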